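/- Let q ∈ ℂ with |q| > 1 and c ∈ ℂ*. If g(z) = Σ g_k z^k is a convergent Laurent series (positive radius of convergence) and f is the formal Laurent series defined by c^k q^{k(k-1)/2} f_k = Σ_{i<k} c^i q^{i(i-1)/2} g_i, so that c z^{-1} f(qz) − f(z) = g(z), then f is also convergent. -/

import Mathlib

/-- A formal Laurent series (given by its coefficient function) is *convergent* if it
defines a germ of a meromorphic function at `0`, i.e. its coefficients are geometrically
bounded: `|f_k| ≤ B·C^k` for `k ≥ 0`. -/
def ConvergentCoeffs (f : ℤ → ℂ) : Prop :=
  ∃ B C : ℝ, 0 < B ∧ 0 < C ∧ ∀ k : ℕ, ‖f k‖ ≤ B * C ^ k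

/-- Let `|q| > 1`, `c ≠ 0`. If `g` is a convergent Laurent series and `f` is the formal
Laurent series solving `c·z⁻¹·f(qz) − f(z) = g(z)` (coefficientwise:
`c q^{k+1} f_{k+1} − f_k = g_k`, which determines `f` uniquely by the recursion
`c^k q^{k(k-1)/2} f_k = Σ_{i<k} c^i q^{i(i-1)/2} g_i`), then `f` is convergent as well. -/
theorem stmt_2 (q c : ℂ) (hq : 1 < ‖q‖) (hc : c ≠ 0)
    (f g : ℤ → ℂ)
    (hfN : ∃ N : ℤ, ∀ k < N, f k = 0) (hgN : ∃ N : ℤ, ∀ k < N, g k = 0)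
    (hg : ConvergentCoeffs g)
    (heq : ∀ k : ℤ, c * q ^ (k + 1) * f (k + 1) - f k = g k) :
    ConvergentCoeffs f := by
  obtain ⟨Bg, Cg, hBg, hCg, hgb⟩ := hg
  have hq0 : (0:ℝ) < ‖q‖ := lt_trans one_pos hq
  have hc0 : (0:ℝ) < ‖c‖ := norm_pos_iff.mpr hc
  set D : ℝ := 1 / (‖c‖ * ‖q‖) with hD
  have hD0 : 0 < D := by positivity
  set C : ℝ := D + Cg with hCdef
  have hC0 : 0 < C := by positivity
  set B : ℝ := max (‖f 0‖ + 1) (D * Bg / Cg) with hBdef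
  have hB0 : 0 < B := lt_of_lt_of_le (by positivity) (le_max_left _ _)
  refine ⟨B, C, hB0, hC0, ?_⟩
  intro k
  induction k with
  | zero =>
      have h1 : ‖f 0‖ + 1 ≤ B := le_max_left _ _
      simpa using by linarith
  | succ n ih =>
      have hrec := heq (n : ℤ)
      have hcast : ((n : ℤ) + 1) = ((n + 1 : ℕ) : ℤ) := by push_cast; ring
      have hrec' : c * q ^ (n + 1 : ℕ) * f ((n : ℤ) + 1) = g n + f n := by
        rw [hcast, zpow_natCast] at hrec
        rw [hcast]
        linear_combination hrec
      have habs : ‖c‖ * ‖q‖ ^ (n + 1) * ‖f ((n : ℤ) + 1)‖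
          = ‖g n + f n‖ := by
        rw [← norm_pow, ← norm_mul, ← norm_mul, hrec']
      have hnum : ‖g n + f n‖ ≤ Bg * Cg ^ n + B * C ^ n := by
        calc ‖g n + f n‖ ≤ ‖g n‖ + ‖f n‖ :=
              norm_add_le _ _
          _ ≤ Bg * Cg ^ n + B * C ^ n := add_le_add (hgb n) ih
      have hden : ‖c‖ * ‖q‖ ≤ ‖c‖ * ‖q‖ ^ (n + 1) := by
        have : ‖q‖ ^ 1 ≤ ‖q‖ ^ (n + 1) :=
          pow_le_pow_right₀ (le_of_lt hq) (Nat.le_add_left 1 n)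
        nlinarith
      have hden0 : 0 < ‖c‖ * ‖q‖ ^ (n + 1) := by positivity
      have hf1 : ‖f ((n : ℤ) + 1)‖ ≤ D * (Bg * Cg ^ n + B * C ^ n) := by
        have h1 : ‖c‖ * ‖q‖ ^ (n + 1) * ‖f ((n : ℤ) + 1)‖
            ≤ Bg * Cg ^ n + B * C ^ n := habs ▸ hnum
        have h2 : ‖c‖ * ‖q‖ * ‖f ((n : ℤ) + 1)‖
            ≤ Bg * Cg ^ n + B * C ^ n := by
          refine le_trans ?_ h1
          exact mul_le_mul_of_nonneg_right hden (norm_nonneg _)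
        rw [hD, div_mul_eq_mul_div, one_mul, le_div_iff₀ (by positivity)]
        nlinarith [norm_nonneg (f ((n : ℤ) + 1))]
      have hBD : D * Bg ≤ B * Cg := by
        have h3 : D * Bg / Cg ≤ B := le_max_right _ _
        rw [div_le_iff₀ hCg] at h3
        linarith
      have hCgC : Cg ^ n ≤ C ^ n := by
        apply pow_le_pow_left₀ (le_of_lt hCg)
        rw [hCdef]; linarith
      have final : D * (Bg * Cg ^ n + B * C ^ n) ≤ B * C ^ (n + 1) := by
        have h4 : D * Bg * Cg ^ n ≤ B * Cg * C ^ n := by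
          calc D * Bg * Cg ^ n ≤ B * Cg * Cg ^ n :=
                mul_le_mul_of_nonneg_right hBD (by positivity)
            _ ≤ B * Cg * C ^ n := mul_le_mul_of_nonneg_left hCgC (by positivity)
        have : B * C ^ (n + 1) = B * D * C ^ n + B * Cg * C ^ n := by
          rw [hCdef]; ring
        rw [this]; nlinarith
      have : ((n + 1 : ℕ) : ℤ) = (n : ℤ) + 1 := by push_cast; ring
      rw [this]
      exact le_trans hf1 final
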